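/- Let f : ℝ → ℝ be continuously differentiable, bounded below, with derivative f' Lipschitz continuous with constant M > 0. Fix ρ ∈ (0, 1/2) and σ ∈ (ρ, 1), and let the steepest descent iterates be L^{n+1} = L^n + λ^n d^n with d^n = -f'(L^n) and step size λ^n > 0 satisfying the Wolfe–Powell conditions f'(L^{n+1})·d^n ≥ σ f'(L^n)·d^n and f(L^{n+1}) ≤ f(L^n) - ρ λ^n (d^n)². Then f'(L^n) → 0 as n → ∞ (equivalently lim_{n→∞} |f'(L^n)|² = 0). -/

import Mathlib

/-- For steepest descent on a continuously differentiable `f : ℝ → ℝ`,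
bounded below, with `M`-Lipschitz derivative and Wolfe–Powell step sizes
(parameters `ρ ∈ (0,1/2)`, `σ ∈ (ρ,1)`), the derivatives along the iterates
tend to zero: `f'(L^n) → 0`. -/
theorem steepest_descent_gradient_to_zero
    (f : ℝ → ℝ) (hf : ContDiff ℝ 1 f)
    (hbdd : BddBelow (Set.range f))
    (M : ℝ) (hM : 0 < M)
    (hLip : ∀ x y : ℝ, |deriv f x - deriv f y| ≤ M * |x - y|)
    (ρ σ : ℝ) (hρ : ρ ∈ Set.Ioo (0 : ℝ) (1 / 2)) (hσ : σ ∈ Set.Ioo ρ 1)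
    (L d lam : ℕ → ℝ)
    (hd : ∀ n, d n = -deriv f (L n))
    (hL : ∀ n, L (n + 1) = L n + lam n * d n)
    (hlam : ∀ n, 0 < lam n)
    (hcurv : ∀ n, σ * (deriv f (L n) * d n) ≤ deriv f (L (n + 1)) * d n)
    (hdec : ∀ n, f (L (n + 1)) ≤ f (L n) - ρ * lam n * (d n) ^ 2) :
    Filter.Tendsto (fun n => deriv f (L n)) Filter.atTop (nhds 0) := by
  obtain ⟨hρ0, hρ2⟩ := hρ
  obtain ⟨hσρ, hσ1⟩ := hσ
  set g : ℕ → ℝ := fun n => deriv f (L n) with hg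
  set c : ℝ := ρ * (1 - σ) / M with hc
  have hσ0 : 0 < σ := lt_trans hρ0 hσρ
  have hc0 : 0 < c := by
    apply div_pos _ hM
    exact mul_pos hρ0 (by linarith)
  -- key inequality
  have key : ∀ n, c * (g n) ^ 2 ≤ f (L n) - f (L (n + 1)) := by
    intro n
    by_cases hgz : g n = 0
    · have := hdec n
      have hd0 : d n = -g n := hd n
      rw [hgz] at hd0
      simp only [hd0, hgz] at this ⊢
      nlinarith
    · -- lam n ≥ (1-σ)/M
      have hdn : d n = -g n := hd n
      have hgsq : 0 < (g n) ^ 2 := by positivity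
      have h1 : (1 - σ) * (g n) ^ 2 ≤ (deriv f (L (n + 1)) - g n) * d n := by
        have := hcurv n
        rw [hdn] at this ⊢
        nlinarith
      have h2 : (deriv f (L (n + 1)) - g n) * d n ≤ M * lam n * (g n) ^ 2 := by
        have hlipn := hLip (L (n + 1)) (L n)
        have hdist : |L (n + 1) - L n| = lam n * |g n| := by
          rw [hL n, hdn]
          rw [show L n + lam n * -g n - L n = lam n * -g n by ring]
          rw [abs_mul, abs_neg, abs_of_pos (hlam n)]
        rw [hdist] at hlipn
        calc (deriv f (L (n + 1)) - g n) * d n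
            ≤ |(deriv f (L (n + 1)) - g n) * d n| := le_abs_self _
          _ = |deriv f (L (n + 1)) - g n| * |d n| := abs_mul _ _
          _ ≤ M * (lam n * |g n|) * |d n| := by
              apply mul_le_mul_of_nonneg_right hlipn (abs_nonneg _)
          _ = M * lam n * (g n) ^ 2 := by
              rw [hdn, abs_neg, ← sq_abs (g n)]; ring
      have hlamlb : (1 - σ) / M ≤ lam n := by
        rw [div_le_iff₀ hM]
        have h3 : (1 - σ) * (g n) ^ 2 ≤ M * lam n * (g n) ^ 2 := le_trans h1 h2
        nlinarith
      have := hdec n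
      rw [hdn] at this
      have h4 : ρ * ((1 - σ) / M) * (g n) ^ 2 ≤ ρ * lam n * (g n) ^ 2 := by
        apply mul_le_mul_of_nonneg_right _ (le_of_lt hgsq)
        exact mul_le_mul_of_nonneg_left hlamlb (le_of_lt hρ0)
      have hcc : c = ρ * ((1 - σ) / M) := by rw [hc]; ring
      rw [hcc]
      nlinarith
  -- partial sums bounded
  obtain ⟨B, hB⟩ := hbdd
  have hBle : ∀ x, B ≤ f x := fun x => hB (Set.mem_range_self x)
  have hsum : ∀ n, ∑ k ∈ Finset.range n, c * (g k) ^ 2 ≤ f (L 0) - B := by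
    intro n
    have htel : ∑ k ∈ Finset.range n, (f (L k) - f (L (k + 1))) = f (L 0) - f (L n) := by
      induction n with
      | zero => simp
      | succ m ih => rw [Finset.sum_range_succ, ih]; ring
    calc ∑ k ∈ Finset.range n, c * (g k) ^ 2
        ≤ ∑ k ∈ Finset.range n, (f (L k) - f (L (k + 1))) :=
          Finset.sum_le_sum fun k _ => key k
      _ = f (L 0) - f (L n) := htel
      _ ≤ f (L 0) - B := by linarith [hBle (L n)]
  have hsummable : Summable (fun k => c * (g k) ^ 2) :=
    summable_of_sum_range_le (fun k => by positivity) hsum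
  have htend : Filter.Tendsto (fun k => c * (g k) ^ 2) Filter.atTop (nhds 0) :=
    hsummable.tendsto_atTop_zero
  have hgsq : Filter.Tendsto (fun k => (g k) ^ 2) Filter.atTop (nhds 0) := by
    have := htend.const_mul (c⁻¹)
    simp only [mul_zero] at this
    convert this using 2 with k
    field_simp
  have habs : Filter.Tendsto (fun k => |g k|) Filter.atTop (nhds 0) := by
    have : Filter.Tendsto (fun k => Real.sqrt ((g k) ^ 2)) Filter.atTop (nhds 0) := by
      have := (Real.continuous_sqrt.tendsto 0).comp hgsq
      simpa [Function.comp_def] using this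
    simpa [Real.sqrt_sq_eq_abs] using this
  exact (tendsto_zero_iff_abs_tendsto_zero g).mpr habs
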